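/- For every mass m > 0 there exists a constant C > 0, depending only on m, such that for every integer dimension d ≥ 1, all vectors a, b ∈ ℝ^d and all signs ι₁, ι₂ ∈ {−1, +1}, the quadratic resonance modulus Δ^{(ι₁,ι₂)}_{a,b} is nonzero and satisfies 1/|Δ^{(ι₁,ι₂)}_{a,b}| ≤ C ⟨a⟩^{1/2} ⟨b⟩^{1/2}. -/
import Mathlib


noncomputable section

/-- The Japanese bracket `⟨x⟩ = √(m + |x|²)` on `ℝ^d`. -/
def jb (m : ℝ) {d : ℕ} (x : EuclideanSpace ℝ (Fin d)) : ℝ :=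
  Real.sqrt (m + ‖x‖ ^ 2)

/-- The quadratic resonance modulus `Δ^{(ι₁,ι₂)}_{k₁,k₂} = ⟨k₁+k₂⟩ − ι₁⟨k₁⟩ − ι₂⟨k₂⟩`. -/
def Δ₂ (m : ℝ) {d : ℕ} (ι₁ ι₂ : ℝ) (k₁ k₂ : EuclideanSpace ℝ (Fin d)) : ℝ :=
  jb m (k₁ + k₂) - ι₁ * jb m k₁ - ι₂ * jb m k₂

variable {m : ℝ} {d : ℕ}

lemma jb_pos (hm : 0 < m) (x : EuclideanSpace ℝ (Fin d)) : 0 < jb m x :=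
  Real.sqrt_pos.2 (by positivity)

lemma jb_sq (hm : 0 < m) (x : EuclideanSpace ℝ (Fin d)) : jb m x ^ 2 = m + ‖x‖ ^ 2 :=
  Real.sq_sqrt (by positivity)

lemma norm_le_jb (hm : 0 < m) (x : EuclideanSpace ℝ (Fin d)) : ‖x‖ ≤ jb m x := by
  have h : ‖x‖ = Real.sqrt (‖x‖ ^ 2) := by
    rw [Real.sqrt_sq (norm_nonneg x)]
  rw [h, jb]
  exact Real.sqrt_le_sqrt (by nlinarith)

lemma sqrtm_le_jb (hm : 0 < m) (x : EuclideanSpace ℝ (Fin d)) : Real.sqrt m ≤ jb m x :=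
  Real.sqrt_le_sqrt (le_add_of_nonneg_right (by positivity))

lemma jb_neg (x : EuclideanSpace ℝ (Fin d)) : jb m (-x) = jb m x := by
  simp [jb]

lemma jb_tri (hm : 0 < m) (u v : EuclideanSpace ℝ (Fin d)) :
    jb m (u + v) ≤ jb m u + jb m v := by
  have hu := norm_le_jb hm u
  have hv := norm_le_jb hm v
  have hup := jb_pos hm u
  have hvp := jb_pos hm v
  have hsu := jb_sq hm u
  have hsv := jb_sq hm v
  have htri : ‖u + v‖ ≤ ‖u‖ + ‖v‖ := norm_add_le u v
  have h : m + ‖u + v‖ ^ 2 ≤ (jb m u + jb m v) ^ 2 := by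
    nlinarith [norm_nonneg u, norm_nonneg v, norm_nonneg (u+v)]
  calc jb m (u + v) = Real.sqrt (m + ‖u + v‖ ^ 2) := rfl
    _ ≤ Real.sqrt ((jb m u + jb m v) ^ 2) := Real.sqrt_le_sqrt h
    _ = jb m u + jb m v := Real.sqrt_sq (by positivity)

lemma key (hm : 0 < m) (u v : EuclideanSpace ℝ (Fin d)) (h : jb m v ≤ jb m u) :
    m / (4 * jb m v) ≤ jb m u + jb m v - jb m (u + v) := by
  have hu := norm_le_jb hm u
  have hv := norm_le_jb hm v
  have hup := jb_pos hm u
  have hvp := jb_pos hm v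
  have hsu := jb_sq hm u
  have hsv := jb_sq hm v
  have hsuv := jb_sq hm (u + v)
  have huvp := jb_pos hm (u + v)
  have htri : ‖u + v‖ ≤ ‖u‖ + ‖v‖ := norm_add_le u v
  have hJtri := jb_tri hm u v
  have hnu := norm_nonneg u
  have hnv := norm_nonneg v
  have h1 : ‖u‖ * ‖v‖ ≤ jb m u * jb m v := by nlinarith
  -- (JuJv - |u||v|)(JuJv + |u||v|) = m(m+|u|²+|v|²) ≥ m Ju²
  have h2 : m * jb m u ^ 2 ≤ (jb m u * jb m v - ‖u‖ * ‖v‖) * (2 * (jb m u * jb m v)) := by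
    nlinarith [sq_nonneg (‖u‖ * ‖v‖), mul_nonneg hnu hnv]
  have h3 : m * jb m u ≤ 2 * jb m v * (jb m u * jb m v - ‖u‖ * ‖v‖) := by
    nlinarith
  have hD : 0 ≤ jb m u + jb m v - jb m (u + v) := sub_nonneg.2 hJtri
  have h4 : m + 2 * (jb m u * jb m v - ‖u‖ * ‖v‖)
      ≤ (jb m u + jb m v - jb m (u + v)) * (4 * jb m u) := by
    nlinarith [mul_nonneg hD (by linarith : (0:ℝ) ≤ 4 * jb m u - (jb m u + jb m v + jb m (u+v))),
      mul_self_le_mul_self (norm_nonneg (u+v)) htri]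
  have h5 : m * jb m v + m * jb m u
      ≤ (jb m u + jb m v - jb m (u + v)) * (4 * jb m u) * jb m v := by
    nlinarith [mul_le_mul_of_nonneg_right h4 hvp.le]
  rw [div_le_iff₀ (by positivity)]
  nlinarith [h5, mul_pos hup hvp, mul_nonneg hD hvp.le]

lemma key_all (hm : 0 < m) (u v : EuclideanSpace ℝ (Fin d)) :
    m / (4 * jb m v) ≤ jb m u + jb m v - jb m (u + v) := by
  rcases le_total (jb m v) (jb m u) with h | h
  · exact key hm u v h
  · have h1 := key hm v u h
    have h2 : jb m (v + u) = jb m (u + v) := by rw [add_comm]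
    have h3 : m / (4 * jb m v) ≤ m / (4 * jb m u) := by
      gcongr
      all_goals first | exact mul_pos (by norm_num) (jb_pos hm _) | exact hm.le | linarith
    linarith

lemma key_all' (hm : 0 < m) (u v : EuclideanSpace ℝ (Fin d)) :
    m / (4 * jb m u) ≤ jb m u + jb m v - jb m (u + v) := by
  have h1 := key_all hm v u
  have h2 : jb m (v + u) = jb m (u + v) := by rw [add_comm]
  linarith

lemma helperA (hm : 0 < m) (X Y K S : ℝ) (habs : |X| = Y) (hK : 0 < K) (hKS : K ≤ S)
    (hY : m / (4 * K) ≤ Y) : X ≠ 0 ∧ 1 / |X| ≤ 4 / m * S := by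
  have hYpos : 0 < Y := lt_of_lt_of_le (by positivity) hY
  have hXne : X ≠ 0 := by
    intro h0; rw [h0] at habs; simp at habs; linarith
  refine ⟨hXne, ?_⟩
  rw [habs]
  have h1 : 1 / Y ≤ 4 * K / m := by
    rw [div_le_div_iff₀ hYpos hm]
    have := (div_le_iff₀ (by positivity : (0:ℝ) < 4 * K)).1 hY
    nlinarith
  have h2 : 4 * K / m ≤ 4 / m * S := by
    rw [div_eq_mul_inv, div_eq_mul_inv]
    have : (0:ℝ) < m⁻¹ := by positivity
    nlinarith
  linarith

lemma helperB (hm : 0 < m) (X Y S : ℝ) (habs : |X| = Y) (hY : Real.sqrt m ≤ Y)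
    (hS : Real.sqrt m ≤ S) : X ≠ 0 ∧ 1 / |X| ≤ 4 / m * S := by
  have hsm : 0 < Real.sqrt m := Real.sqrt_pos.2 hm
  have hsm2 : Real.sqrt m * Real.sqrt m = m := Real.mul_self_sqrt hm.le
  have hYpos : 0 < Y := lt_of_lt_of_le hsm hY
  have hXne : X ≠ 0 := by
    intro h0; rw [h0] at habs; simp at habs; linarith
  refine ⟨hXne, ?_⟩
  rw [habs]
  have h1 : 1 / Y ≤ 1 / Real.sqrt m := by
    apply one_div_le_one_div_of_le hsm hY
  have h2 : 1 / Real.sqrt m ≤ 4 / m * S := by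
    have h3 : m ≤ S * Real.sqrt m := by
      nlinarith [mul_le_mul_of_nonneg_right hS hsm.le]
    rw [div_le_iff₀ hsm, mul_assoc, div_mul_eq_mul_div, le_div_iff₀ hm]
    linarith
  linarith


/-- For every mass `m > 0` there is a constant `C > 0`, depending only on `m`, such that in
every dimension `d ≥ 1`, for all `a b ∈ ℝ^d` and signs `ι₁, ι₂ ∈ {−1,+1}`, the quadratic
resonance modulus is nonzero and `1/|Δ^{(ι₁,ι₂)}_{a,b}| ≤ C ⟨a⟩^{1/2} ⟨b⟩^{1/2}`. -/
theorem stmt0 (m : ℝ) (hm : 0 < m) :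
    ∃ C : ℝ, 0 < C ∧ ∀ (d : ℕ), 1 ≤ d →
      ∀ (a b : EuclideanSpace ℝ (Fin d)) (ι₁ ι₂ : ℝ),
        (ι₁ = -1 ∨ ι₁ = 1) → (ι₂ = -1 ∨ ι₂ = 1) →
        Δ₂ m ι₁ ι₂ a b ≠ 0 ∧
        1 / |Δ₂ m ι₁ ι₂ a b| ≤ C * Real.sqrt (jb m a) * Real.sqrt (jb m b) := by
  refine ⟨4 / m, by positivity, ?_⟩
  intro d hd a b ι₁ ι₂ h1 h2
  have hap := jb_pos hm a
  have hbp := jb_pos hm b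
  have habp := jb_pos hm (a + b)
  have hsma := sqrtm_le_jb hm a
  have hsmb := sqrtm_le_jb hm b
  have hsmab := sqrtm_le_jb hm (a + b)
  have hsm : 0 < Real.sqrt m := Real.sqrt_pos.2 hm
  have hsm2 : Real.sqrt m * Real.sqrt m = m := Real.mul_self_sqrt hm.le
  set S := Real.sqrt (jb m a) * Real.sqrt (jb m b) with hS
  have hSm : Real.sqrt m ≤ S := by
    have h3 : m ≤ jb m a * jb m b := by nlinarith
    rw [hS, ← Real.sqrt_mul hap.le]
    calc Real.sqrt m ≤ Real.sqrt (jb m a * jb m b) := Real.sqrt_le_sqrt h3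
      _ = _ := rfl
  have hbS : jb m b ≤ jb m a → jb m b ≤ S := by
    intro hba
    rw [hS]
    calc jb m b = Real.sqrt (jb m b) * Real.sqrt (jb m b) := (Real.mul_self_sqrt hbp.le).symm
      _ ≤ Real.sqrt (jb m a) * Real.sqrt (jb m b) :=
        mul_le_mul_of_nonneg_right (Real.sqrt_le_sqrt hba) (Real.sqrt_nonneg _)
  have haS : jb m a ≤ jb m b → jb m a ≤ S := by
    intro hab
    rw [hS]
    calc jb m a = Real.sqrt (jb m a) * Real.sqrt (jb m a) := (Real.mul_self_sqrt hap.le).symm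
      _ ≤ Real.sqrt (jb m a) * Real.sqrt (jb m b) :=
        mul_le_mul_of_nonneg_left (Real.sqrt_le_sqrt hab) (Real.sqrt_nonneg _)
  rw [mul_assoc, ← hS]
  rcases h1 with rfl | rfl <;> rcases h2 with rfl | rfl
  · -- ι₁ = -1, ι₂ = -1 : Δ = jab + ja + jb
    have hval : Δ₂ m (-1) (-1) a b = jb m (a+b) + jb m a + jb m b := by
      simp only [Δ₂]; ring
    rw [hval]
    exact helperB hm _ _ S (abs_of_pos (by linarith)) (by linarith) hSm
  · -- ι₁ = -1, ι₂ = 1 : Δ = jab + ja - jb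
    have hval : Δ₂ m (-1) 1 a b = jb m (a+b) + jb m a - jb m b := by
      simp only [Δ₂]; ring
    rw [hval]
    rcases le_total (jb m a) (jb m b) with hab | hba
    · have hkey := key_all hm (a + b) (-a)
      have heq : (a + b) + (-a) = b := by abel
      rw [heq, jb_neg] at hkey
      have hY : m / (4 * jb m a) ≤ jb m (a+b) + jb m a - jb m b := by linarith
      exact helperA hm _ _ _ S (abs_of_pos (lt_of_lt_of_le (div_pos hm (by linarith)) hY))
        hap (haS hab) hY
    · exact helperB hm _ _ S (abs_of_pos (by linarith)) (by linarith) hSm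
  · -- ι₁ = 1, ι₂ = -1 : Δ = jab - ja + jb
    have hval : Δ₂ m 1 (-1) a b = jb m (a+b) - jb m a + jb m b := by
      simp only [Δ₂]; ring
    rw [hval]
    rcases le_total (jb m b) (jb m a) with hba | hab
    · have hkey := key_all hm (a + b) (-b)
      have heq : (a + b) + (-b) = a := by abel
      rw [heq, jb_neg] at hkey
      have hY : m / (4 * jb m b) ≤ jb m (a+b) - jb m a + jb m b := by linarith
      exact helperA hm _ _ _ S (abs_of_pos (lt_of_lt_of_le (div_pos hm (by linarith)) hY))
        hbp (hbS hba) hY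
    · exact helperB hm _ _ S (abs_of_pos (by linarith)) (by linarith) hSm
  · -- ι₁ = 1, ι₂ = 1 : Δ = jab - ja - jb
    have hval : Δ₂ m 1 1 a b = -(jb m a + jb m b - jb m (a+b)) := by
      simp only [Δ₂]; ring
    rw [hval, abs_neg]
    rcases le_total (jb m b) (jb m a) with hba | hab
    · have hY := key_all hm a b
      have hpos : 0 < jb m a + jb m b - jb m (a+b) :=
        lt_of_lt_of_le (div_pos hm (by linarith)) hY
      have hres := helperA hm _ _ _ S (abs_of_pos hpos) hbp (hbS hba) hY
      exact ⟨neg_ne_zero.2 hres.1, hres.2⟩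
    · have hY := key_all' hm a b
      have hpos : 0 < jb m a + jb m b - jb m (a+b) :=
        lt_of_lt_of_le (div_pos hm (by linarith)) hY
      have hres := helperA hm _ _ _ S (abs_of_pos hpos) hap (haS hab) hY
      exact ⟨neg_ne_zero.2 hres.1, hres.2⟩
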